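/- Let K = 𝔽_p(t), R = K[x], and Q = (x^p − t). Then every K-linear derivation d of R satisfies d(x^p − t) = 0 ∈ Q, so Q^{⟨2⟩_K} = Q (the second differential power equals Q), while Q^{(2)} = Q² ≠ Q; hence the Zariski–Nagata theorem fails without the separability hypothesis. -/

import Mathlib

/-- The B-linear differential operators on S of order at most n, defined inductively. -/
def DiffOp (B S : Type*) [CommRing B] [CommRing S] [Algebra B S] : ℕ → Set (S →ₗ[B] S)
  | 0 => {δ | ∃ s : S, δ = LinearMap.mulLeft B s}
  | n + 1 => {δ | ∀ s : S,
      δ ∘ₗ LinearMap.mulLeft B s - LinearMap.mulLeft B s ∘ₗ δ ∈ DiffOp B S n}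

open Polynomial in
/-- for K = 𝔽_p(t), R = K[x], Q = (x^p - t): every K-linear derivation
kills x^p - t, the second differential power Q^{⟨2⟩_K} equals Q, while
Q^{(2)} = Q² ≠ Q. -/
theorem stmt_18 (p : ℕ) [Fact p.Prime]
    (Q : Ideal (Polynomial (RatFunc (ZMod p))))
    (hQdef : Q = Ideal.span {(Polynomial.X : Polynomial (RatFunc (ZMod p))) ^ p -
      Polynomial.C RatFunc.X})
    [hQ : Q.IsPrime] :
    (∀ d : Derivation (RatFunc (ZMod p)) (Polynomial (RatFunc (ZMod p)))
        (Polynomial (RatFunc (ZMod p))),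
      d ((Polynomial.X : Polynomial (RatFunc (ZMod p))) ^ p -
        Polynomial.C RatFunc.X) = 0) ∧
    ({f : Polynomial (RatFunc (ZMod p)) |
        ∀ m < 2, ∀ d ∈ DiffOp (RatFunc (ZMod p)) (Polynomial (RatFunc (ZMod p))) m,
          d f ∈ Q} = (Q : Set (Polynomial (RatFunc (ZMod p))))) ∧
    (Ideal.comap (algebraMap (Polynomial (RatFunc (ZMod p))) (Localization Q.primeCompl))
      (Ideal.map (algebraMap (Polynomial (RatFunc (ZMod p))) (Localization Q.primeCompl))
        (Q ^ 2)) = Q ^ 2) ∧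
    Q ^ 2 ≠ Q := by
  set K := RatFunc (ZMod p)
  set R := Polynomial K
  set q : R := X ^ p - C RatFunc.X with hq
  have hp1 : p ≠ 0 := (Fact.out : p.Prime).ne_zero
  have hq0 : q ≠ 0 := (monic_X_pow_sub_C _ hp1).ne_zero
  have hqprime : Prime q := (Ideal.span_singleton_prime hq0).mp (hQdef ▸ hQ)
  have hcharp : ((p : ℕ) : R) = 0 := by
    have h1 : CharP K p := charP_of_injective_algebraMap' (ZMod p) (A := K) p
    have h2 : CharP R p := charP_of_injective_algebraMap' K (A := R) p
    exact CharP.cast_eq_zero R p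
  refine ⟨?_, ?_, ?_, ?_⟩
  · -- Part 1: derivations kill q
    intro d
    rw [map_sub, Derivation.leibniz_pow]
    rw [Polynomial.C_eq_algebraMap, Derivation.map_algebraMap]
    simp [hcharp]
  · -- Part 2
    ext f
    simp only [Set.mem_setOf_eq, SetLike.mem_coe]
    constructor
    · intro h
      have h0 := h 0 (by norm_num) (LinearMap.mulLeft K 1) ⟨1, rfl⟩
      simpa using h0
    · intro hf m hm d hd
      interval_cases m
      · obtain ⟨s, rfl⟩ := hd
        simpa using Q.mul_mem_left s hf
      · -- order one operators
        have hcomm : ∀ s x : R, d (s * x) = s * d x + (d s - s * d 1) * x := by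
          intro s x
          obtain ⟨c, hc⟩ := hd s
          have hx := DFunLike.congr_fun hc x
          have h1 := DFunLike.congr_fun hc 1
          simp only [LinearMap.sub_apply, LinearMap.comp_apply, LinearMap.mulLeft_apply,
            mul_one] at hx h1
          rw [← h1] at hx
          linear_combination hx
        have hXn : ∀ n : ℕ, d (X ^ (n + 1)) = X ^ (n + 1) * d 1 +
            ((n : R) + 1) * (d X - X * d 1) * X ^ n := by
          intro n
          induction n with
          | zero =>
            have h := hcomm X 1
            simp only [mul_one] at h
            simp only [zero_add, pow_one, pow_zero, Nat.cast_zero, mul_one]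
            rw [h]; ring
          | succ n ih =>
            have := hcomm X (X ^ (n + 1))
            rw [← pow_succ'] at this
            rw [this, ih]
            rw [Nat.cast_succ]
            ring
        have hdq : d q = q * d 1 := by
          obtain ⟨m, hmp⟩ : ∃ m, p = m + 1 := ⟨p - 1, (Nat.succ_pred_eq_of_pos
            (Fact.out : p.Prime).pos).symm⟩
          have hmc : ((m : R) + 1) = 0 := by
            have : (((m + 1 : ℕ)) : R) = 0 := by rw [← hmp]; exact hcharp
            rw [Nat.cast_succ] at this
            exact this
          have hCt : d (C RatFunc.X) = C RatFunc.X * d 1 := by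
            have hsm : (C RatFunc.X : R) * (1 : R) = (RatFunc.X : K) • (1 : R) := by
              rw [Algebra.smul_def, Polynomial.algebraMap_eq]
            calc d (C RatFunc.X) = d (C RatFunc.X * 1) := by rw [mul_one]
              _ = d ((RatFunc.X : K) • (1 : R)) := by rw [hsm]
              _ = (RatFunc.X : K) • d 1 := d.map_smul _ _
              _ = C RatFunc.X * d 1 := by rw [Algebra.smul_def, Polynomial.algebraMap_eq]
          have hXp : d (X ^ p) = X ^ p * d 1 := by
            have h := hXn m
            rw [← hmp] at h
            rw [h, hmc]
            ring
          rw [hq, map_sub, hXp, hCt]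
          ring
        obtain ⟨g, hg⟩ := Ideal.mem_span_singleton.mp (hQdef ▸ hf)
        have : d f = q * d g := by
          rw [hg, hcomm q g, hdq]
          ring
        rw [hQdef, this]
        exact Ideal.mul_mem_right _ _ (Ideal.mem_span_singleton_self q)
  · -- Part 3: Q^(2) = Q^2
    refine le_antisymm ?_ Ideal.le_comap_map
    intro a ha
    obtain ⟨⟨b, s⟩, h⟩ := (IsLocalization.mem_map_algebraMap_iff Q.primeCompl
      (Localization Q.primeCompl)).1 (Ideal.mem_comap.1 ha)
    replace h : algebraMap R (Localization Q.primeCompl) ((s : R) * a) =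
        algebraMap R (Localization Q.primeCompl) (b : R) := by
      simpa only [← map_mul, mul_comm] using h
    obtain ⟨c, hc⟩ := (IsLocalization.eq_iff_exists Q.primeCompl _).1 h
    have hmem : (c : R) * (s : R) * a ∈ Q ^ 2 := by
      rw [mul_assoc, hc]
      exact (Q ^ 2).mul_mem_left _ b.2
    have hQ2 : Q ^ 2 = Ideal.span {q ^ 2} := by
      rw [hQdef, Ideal.span_singleton_pow]
    rw [hQ2, Ideal.mem_span_singleton] at hmem ⊢
    have hcs : ¬ q ∣ (c : R) * (s : R) := by
      intro hdvd
      have hQmem : ∀ x : R, q ∣ x → x ∈ Q := fun x hx => by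
        rw [hQdef]; exact Ideal.mem_span_singleton.mpr hx
      have : (c : R) * (s : R) ∈ Q := hQmem _ hdvd
      rcases hQ.mem_or_mem this with h' | h'
      · exact c.2 h'
      · exact s.2 h'
    -- q^2 ∣ u * a, q ∤ u  ⇒ q^2 ∣ a
    have h1 : q ∣ a := by
      have : q ∣ (c : R) * (s : R) * a := dvd_trans (dvd_pow_self q two_ne_zero) hmem
      rcases hqprime.dvd_mul.mp this with h' | h'
      · exact absurd h' hcs
      · exact h'
    obtain ⟨a', rfl⟩ := h1
    have h2 : q ∣ a' := by
      obtain ⟨r, hr⟩ := hmem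
      have : q * ((c : R) * (s : R) * a' - q * r) = 0 := by
        rw [mul_sub]; rw [pow_two] at hr; linear_combination hr
      have h0 : (c : R) * (s : R) * a' = q * r :=
        sub_eq_zero.mp ((mul_eq_zero.mp this).resolve_left hq0)
      rcases hqprime.dvd_mul.mp ⟨r, h0⟩ with h' | h'
      · exact absurd h' hcs
      · exact h'
    obtain ⟨a'', rfl⟩ := h2
    exact ⟨a'', by ring⟩
  · -- Part 4: Q^2 ≠ Q
    intro hEq
    have hqQ : q ∈ Q := hQdef ▸ Ideal.mem_span_singleton_self q
    rw [← hEq, hQdef, Ideal.span_singleton_pow, Ideal.mem_span_singleton] at hqQ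
    obtain ⟨r, hr⟩ := hqQ
    have : q * (1 - q * r) = 0 := by rw [pow_two] at hr; linear_combination hr
    have h0 : q * r = 1 := by
      have h1 := (mul_eq_zero.mp this).resolve_left hq0
      linear_combination -h1
    exact hqprime.not_isUnit (IsUnit.of_mul_eq_one _ h0)
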